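/- Assume L·1ₙ = 0, all diagonal entries rᵢ of R are nonzero, p ≠ 0 and τ ≠ 0. Define the vectors ζ₁ = (1ₙ; 0ₙ; 0ₙ), ζ₂ = (1ₙ; (1/τ)·R⁻¹1ₙ; 0ₙ), and ζ₃ = (−(τκ₂/p²)·1ₙ; (κ₂/p)·R⁻¹1ₙ; R⁻¹1ₙ) in ℝ^{3n}. Then A·ζ₁ = ζ₁, A·ζ₂ = ζ₂ + ζ₁, and A·ζ₃ = (1−p)·ζ₃; i.e., (ζ₁, ζ₂) is a right Jordan chain of A for the eigenvalue 1 and ζ₃ is a right eigenvector of A for the eigenvalue 1−p. -/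

import Mathlib

open Matrix Polynomial

/-- The 3n×3n transition matrix of the skewless clock-synchronization algorithm. -/
noncomputable def Amat (n : ℕ) (τ κ₁ κ₂ p : ℝ) (L R : Matrix (Fin n) (Fin n) ℝ) :
    Matrix (Fin n ⊕ Fin n ⊕ Fin n) (Fin n ⊕ Fin n ⊕ Fin n) ℝ :=
  Matrix.fromBlocks 1 (Matrix.fromCols (τ • R) 0)
    (Matrix.fromRows ((-κ₁) • L) ((-p) • L))
    (Matrix.fromBlocks 1 ((-κ₂) • (1 : Matrix (Fin n) (Fin n) ℝ)) 0
      ((1 - p) • (1 : Matrix (Fin n) (Fin n) ℝ)))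

/-- Right Jordan chain of `A` for the eigenvalue `1` and right eigenvector for `1 − p`
(right-eigenvector part of Lemma 2 of the paper):
`A ζ₁ = ζ₁`, `A ζ₂ = ζ₂ + ζ₁`, `A ζ₃ = (1−p) ζ₃` with
`ζ₁ = (1ₙ; 0; 0)`, `ζ₂ = (1ₙ; (1/τ)R⁻¹1ₙ; 0)`,
`ζ₃ = (−(τκ₂/p²)1ₙ; (κ₂/p)R⁻¹1ₙ; R⁻¹1ₙ)`. -/
theorem stmt3 (n : ℕ) (hn : 1 ≤ n) (τ κ₁ κ₂ p : ℝ) (hτ : τ ≠ 0) (hp : p ≠ 0)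
    (L : Matrix (Fin n) (Fin n) ℝ) (r : Fin n → ℝ) (hr : ∀ i, r i ≠ 0)
    (R : Matrix (Fin n) (Fin n) ℝ) (hR : R = Matrix.diagonal r)
    (hL1 : L *ᵥ (fun _ => (1 : ℝ)) = 0)
    (ζ₁ ζ₂ ζ₃ : (Fin n ⊕ Fin n ⊕ Fin n) → ℝ)
    (hζ₁ : ζ₁ = Sum.elim (fun _ => (1 : ℝ)) (Sum.elim (fun _ => 0) (fun _ => 0)))
    (hζ₂ : ζ₂ = Sum.elim (fun _ => (1 : ℝ))
      (Sum.elim (fun i => (1 / τ) * (r i)⁻¹) (fun _ => 0)))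
    (hζ₃ : ζ₃ = Sum.elim (fun _ => -(τ * κ₂ / p ^ 2))
      (Sum.elim (fun i => (κ₂ / p) * (r i)⁻¹) (fun i => (r i)⁻¹))) :
    (Amat n τ κ₁ κ₂ p L R) *ᵥ ζ₁ = ζ₁ ∧
    (Amat n τ κ₁ κ₂ p L R) *ᵥ ζ₂ = ζ₂ + ζ₁ ∧
    (Amat n τ κ₁ κ₂ p L R) *ᵥ ζ₃ = (1 - p) • ζ₃ := by
  have hL : ∀ i, ∑ j, L i j = 0 := by
    intro i
    have := congrFun hL1 i
    simpa [Matrix.mulVec, dotProduct] using this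
  have hL' : ∀ (a : ℝ) (i : Fin n), ∑ j, a * L i j = 0 := fun a i => by
    rw [← Finset.mul_sum, hL i, mul_zero]
  subst hR hζ₁ hζ₂ hζ₃
  refine ⟨?_, ?_, ?_⟩ <;> funext x <;> rcases x with i | i | i <;>
    simp [Amat, Matrix.mulVec, dotProduct, Fintype.sum_sum_type,
      Matrix.fromBlocks, Matrix.fromCols, Matrix.fromRows_apply_inl, Matrix.fromRows_apply_inr, Matrix.one_apply,
      Matrix.diagonal_apply, ite_mul, Finset.sum_ite_eq, Finset.sum_ite_eq',
      mul_assoc, hL, hL']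
  all_goals
    try rw [show (∑ x : Fin n, κ₁ * (L i x * (τ * κ₂ / p ^ 2))) = ∑ x : Fin n, (κ₁ * τ * κ₂ / p ^ 2) * L i x
      from Finset.sum_congr rfl fun x _ => by ring, hL']
  all_goals
    try rw [show (∑ x : Fin n, p * (L i x * (τ * κ₂)) / p ^ 2) = ∑ x : Fin n, (p * τ * κ₂ / p ^ 2) * L i x
      from Finset.sum_congr rfl fun x _ => by ring, hL']
  all_goals
    try rw [show (∑ x : Fin n, p * L i x * τ * κ₂ * p⁻¹ ^ 2) = ∑ x : Fin n, (p * τ * κ₂ * p⁻¹ ^ 2) * L i x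
      from Finset.sum_congr rfl fun x _ => by ring, hL']
  all_goals
    try rw [show (∑ x : Fin n, κ₁ * L i x * τ * κ₂ * p⁻¹ ^ 2) = ∑ x : Fin n, (κ₁ * τ * κ₂ * p⁻¹ ^ 2) * L i x
      from Finset.sum_congr rfl fun x _ => by ring, hL']
  all_goals try field_simp [hr i]
  all_goals
    try rw [show (∑ x : Fin n, κ₁ * (L i x * (τ * κ₂ / p ^ 2))) = ∑ x : Fin n, (κ₁ * τ * κ₂ / p ^ 2) * L i x
      from Finset.sum_congr rfl fun x _ => by ring, hL']
  all_goals
    try rw [show (∑ x : Fin n, p * (L i x * (τ * κ₂)) / p ^ 2) = ∑ x : Fin n, (p * τ * κ₂ / p ^ 2) * L i x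
      from Finset.sum_congr rfl fun x _ => by ring, hL']
  all_goals
    try rw [show (∑ x : Fin n, p * L i x * τ * κ₂ * p⁻¹ ^ 2) = ∑ x : Fin n, (p * τ * κ₂ * p⁻¹ ^ 2) * L i x
      from Finset.sum_congr rfl fun x _ => by ring, hL']
  all_goals
    try rw [show (∑ x : Fin n, κ₁ * L i x * τ * κ₂ * p⁻¹ ^ 2) = ∑ x : Fin n, (κ₁ * τ * κ₂ * p⁻¹ ^ 2) * L i x
      from Finset.sum_congr rfl fun x _ => by ring, hL']
  all_goals try field_simp [hr i]
  all_goals try rw [div_self (mul_ne_zero hτ (hr i))]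
  all_goals try ring
  all_goals
    rw [show (∑ x : Fin n, τ * κ₂ * L i x * p⁻¹) = ∑ x : Fin n, (τ * κ₂ * p⁻¹) * L i x
      from Finset.sum_congr rfl fun x _ => by ring, hL']
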